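/- In the setting of the R_right Lag system (Lemma on clockwise rotation), starting from (s₁,blank)...(s_{n-2},blank)(s_{n-1},R)(sₙ,blank) with n ≥ 5, after exactly n iterations the memory string is (s₁,blank)...(s_{n-3},blank)(s_{n-2},d)(s_{n-1},t)(sₙ,blank). -/

import Mathlib

namespace Stmt7

/-- Control symbols for the clockwise-rotation construction. -/
inductive Ctl | blank | p | t | w | R | d | g | z | v | r
deriving DecidableEq

/-- The rule set `R_right` on control coordinates: `R_t` together with the
rules for the pulsed-hold token `d`, the interaction tokens `g`, `z`,
the victory pulse `v`, and the begin/end tokens `R`, `r`. -/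
def rc : Ctl → Ctl → Option Ctl
  | .blank, .blank => some .blank
  | .blank, .p => some .p
  | .p, .blank => some .blank
  | .blank, .t => some .p
  | .blank, .w => some .blank
  | .t, .blank => some .w
  | .w, .blank => some .w
  | .w, .p => some .t
  | .p, .w => some .blank
  | .blank, .R => some .d
  | .blank, .d => some .blank
  | .blank, .g => some .z
  | .blank, .z => some .p
  | .blank, .v => some .v
  | .blank, .r => some .blank
  | .R, .blank => some .t
  | .w, .d => some .v
  | .w, .z => some .w
  | .p, .d => some .blank
  | .d, .blank => some .d
  | .d, .t => some .g
  | .d, .p => some .g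
  | .d, .v => some .r
  | .g, .blank => some .blank
  | .g, .w => some .blank
  | .z, .blank => some .d
  | .v, .blank => some .blank
  | .v, .d => some .blank
  | _, _ => none

/-- One Lag iteration with context length 2: match the control symbols of the
first two pairs, delete the first pair, append a pair with the first pair's
data symbol and the rule's output control symbol. -/
def step {α : Type*} (r : Ctl → Ctl → Option Ctl) :
    List (α × Ctl) → Option (List (α × Ctl))
  | (x, a) :: (y, b) :: rest => (r a b).map fun c => (y, b) :: rest ++ [(x, c)]
  | _ => none

/-- `k` iterations of the Lag system. -/
def iterL {α : Type*} (r : Ctl → Ctl → Option Ctl) :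
    ℕ → List (α × Ctl) → Option (List (α × Ctl))
  | 0, s => some s
  | k + 1, s => (step r s).bind (iterL r k)

end Stmt7


section Stmt7Aux
open Stmt7
variable {α : Type*}

lemma iterL_add (j k : ℕ) (s : List (α × Ctl)) :
    iterL rc (j + k) s = (iterL rc j s).bind (iterL rc k) := by
  induction j generalizing s with
  | zero => simp [iterL]
  | succ j ih =>
    rw [Nat.succ_add]
    simp only [iterL]
    cases Stmt7.step rc s with
    | none => simp
    | some t => simp [ih]

lemma rot (xs : List α) : ∀ (b : α) (L : List (α × Ctl)),
    iterL rc xs.length ((xs.map fun x => (x, Ctl.blank)) ++ (b, Ctl.blank) :: L) =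
    some ((b, Ctl.blank) :: (L ++ xs.map fun x => (x, Ctl.blank))) := by
  induction xs with
  | nil => intro b L; simp [iterL]
  | cons x xs ih =>
    intro b L
    cases xs with
    | nil => simp [iterL, step, rc]
    | cons y ys =>
      have h := ih b (L ++ [(x, Ctl.blank)])
      rw [show (x :: y :: ys).length = 1 + (y :: ys).length by simp [Nat.add_comm]]
      rw [iterL_add 1 (y :: ys).length]
      simp only [List.map_cons, List.cons_append]
      have hone : iterL rc 1 ((x, Ctl.blank) :: (y, Ctl.blank) ::
          (List.map (fun x => (x, Ctl.blank)) ys ++ (b, Ctl.blank) :: L)) =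
          some ((y, Ctl.blank) :: (List.map (fun x => (x, Ctl.blank)) ys ++ (b, Ctl.blank) :: L)
            ++ [(x, Ctl.blank)]) := rfl
      rw [hone, Option.bind_some]
      rw [show ((y, Ctl.blank) :: (List.map (fun x => (x, Ctl.blank)) ys ++ (b, Ctl.blank) :: L) ++ [(x, Ctl.blank)])
          = (List.map (fun x => (x, Ctl.blank)) (y :: ys) ++ (b, Ctl.blank) :: (L ++ [(x, Ctl.blank)])) by simp]
      rw [h]
      simp

lemma core (x0 x1 : α) (rest : List α) (b c d : α) :
    iterL rc 3 ((b, Ctl.blank) :: ([(c, Ctl.R), (d, Ctl.blank)] ++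
      (x0 :: x1 :: rest).map fun x => (x, Ctl.blank))) =
    some (((x0 :: x1 :: rest).map fun x => (x, Ctl.blank)) ++
      [(b, Ctl.d), (c, Ctl.t), (d, Ctl.blank)]) := by
  simp [iterL, step, rc]

end Stmt7Aux

open Stmt7 in
/-- Starting from `(s₁,blank)...(s_{n-2},blank)(s_{n-1},R)(sₙ,blank)` with `n ≥ 5`,
after exactly `n` iterations the memory string is
`(s₁,blank)...(s_{n-3},blank)(s_{n-2},d)(s_{n-1},t)(sₙ,blank)`. -/
theorem stmt7 {α : Type*} (n : ℕ) (hn : 5 ≤ n) (s : Fin n → α) :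
    iterL rc n
      (List.ofFn fun i : Fin n => (s i, if i.val = n - 2 then Ctl.R else Ctl.blank)) =
    some (List.ofFn fun i : Fin n =>
      (s i, if i.val = n - 3 then Ctl.d
            else if i.val = n - 2 then Ctl.t else Ctl.blank)) := by
  obtain ⟨m, rfl⟩ : ∃ m, n = m + 5 := ⟨n - 5, by omega⟩
  simp only [show m + 5 - 2 = m + 3 from rfl, show m + 5 - 3 = m + 2 from rfl]
  set xs : List α := List.ofFn fun i : Fin (m + 2) => s ⟨i, by omega⟩ with hxs
  set b : α := s ⟨m + 2, by omega⟩ with hb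
  set c : α := s ⟨m + 3, by omega⟩ with hc
  set dd : α := s ⟨m + 4, by omega⟩ with hdd
  have h1 : (List.ofFn fun i : Fin (m + 5) => (s i, if i.val = m + 3 then Ctl.R else Ctl.blank))
      = (xs.map fun x => (x, Ctl.blank)) ++ (b, Ctl.blank) :: [(c, Ctl.R), (dd, Ctl.blank)] := by
    apply List.ext_getElem
    · simp [hxs]
    · intro i hi hi'
      have hi5 : i < m + 5 := by simp at hi; omega
      rcases (by omega : i < m + 2 ∨ i = m + 2 ∨ i = m + 3 ∨ i = m + 4) with h | h | h | h
      · rw [List.getElem_ofFn, List.getElem_append_left (by simp [hxs]; omega),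
          if_neg (by simp; omega)]
        simp only [hxs, List.getElem_map, List.getElem_ofFn]
      · subst h
        rw [List.getElem_ofFn, List.getElem_append_right (by simp [hxs])]
        simp [hxs, hb, Fin.ext_iff]
      · subst h
        rw [List.getElem_ofFn, List.getElem_append_right (by simp [hxs])]
        simp [hxs, hc, Fin.ext_iff]
      · subst h
        rw [List.getElem_ofFn, List.getElem_append_right (by simp [hxs])]
        simp [hxs, hdd, Fin.ext_iff]
  have h2 : (List.ofFn fun i : Fin (m + 5) =>
        (s i, if i.val = m + 2 then Ctl.d
              else if i.val = m + 3 then Ctl.t else Ctl.blank))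
      = (xs.map fun x => (x, Ctl.blank)) ++ [(b, Ctl.d), (c, Ctl.t), (dd, Ctl.blank)] := by
    apply List.ext_getElem
    · simp [hxs]
    · intro i hi hi'
      have hi5 : i < m + 5 := by simp at hi; omega
      rcases (by omega : i < m + 2 ∨ i = m + 2 ∨ i = m + 3 ∨ i = m + 4) with h | h | h | h
      · rw [List.getElem_ofFn, List.getElem_append_left (by simp [hxs]; omega),
          if_neg (by simp; omega), if_neg (by simp; omega)]
        simp only [hxs, List.getElem_map, List.getElem_ofFn]
      · subst h
        rw [List.getElem_ofFn, List.getElem_append_right (by simp [hxs])]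
        simp [hxs, hb, Fin.ext_iff]
      · subst h
        rw [List.getElem_ofFn, List.getElem_append_right (by simp [hxs])]
        simp [hxs, hc, Fin.ext_iff]
      · subst h
        rw [List.getElem_ofFn, List.getElem_append_right (by simp [hxs])]
        simp [hxs, hdd, Fin.ext_iff]
  rw [h1, h2]
  have key := iterL_add (m + 2) 3
    ((xs.map fun x => (x, Ctl.blank)) ++ (b, Ctl.blank) :: [(c, Ctl.R), (dd, Ctl.blank)])
  rw [show m + 2 + 3 = m + 5 from rfl] at key
  rw [key]
  have hr := rot xs b [(c, Ctl.R), (dd, Ctl.blank)]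
  rw [show xs.length = m + 2 by simp [hxs]] at hr
  rw [hr, Option.bind_some]
  obtain ⟨x0, x1, rest, hxsc⟩ : ∃ x0 x1 rest, xs = x0 :: x1 :: rest := by
    rw [hxs, List.ofFn_succ, List.ofFn_succ]
    exact ⟨_, _, _, rfl⟩
  rw [hxsc]
  exact core x0 x1 rest b c dd
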